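/- (Blichfeldt's theorem) If τ is a full-rank lattice in ℝ^n and X ⊆ ℝ^n is a measurable set with vol(X) > det(τ), then there exist two distinct points z₁, z₂ ∈ X such that z₁ − z₂ ∈ τ. -/

import Mathlib

open MeasureTheory

set_option maxHeartbeats 1000000 in
set_option synthInstance.maxHeartbeats 400000 in
theorem stmt_4 {n : ℕ} (A : Matrix (Fin n) (Fin n) ℝ) (hA : IsUnit A.det)
    (X : Set (Fin n → ℝ)) (hX : MeasurableSet X)
    (hvol : ENNReal.ofReal |A.det| < volume X) :
    ∃ z₁ ∈ X, ∃ z₂ ∈ X, z₁ ≠ z₂ ∧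
      ∃ x : Fin n → ℤ, z₁ - z₂ = A.mulVec fun j => (x j : ℝ) := by
  classical
  have hinv : Invertible A := A.invertibleOfIsUnitDet hA
  let e := A.toLinearEquiv' hinv
  let b : Module.Basis (Fin n) ℝ (Fin n → ℝ) := (Pi.basisFun ℝ (Fin n)).map e
  have hb : ∀ i, b i = A.mulVec (Pi.single i 1) := by
    intro i
    simp only [b, Module.Basis.map_apply, Pi.basisFun_apply]
    rfl
  have hfd := ZSpan.isAddFundamentalDomain' b (volume : Measure (Fin n → ℝ))
  have hvolfd : volume (ZSpan.fundamentalDomain b) = ENNReal.ofReal |A.det| := by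
    have hAb : Matrix.of (fun i => b i) = A.transpose := by
      ext i j
      simp [hb, Matrix.mulVec_single, Matrix.transpose_apply]
    rw [ZSpan.volume_fundamentalDomain, hAb, Matrix.det_transpose]
  have hcount : Countable (Submodule.span ℤ (Set.range b)).toAddSubgroup :=
    (inferInstance : Countable (Submodule.span ℤ (Set.range b)))
  obtain ⟨x, hx, y, hy, g, hg, hgxy⟩ :=
    hfd.exists_ne_zero_vadd_eq (hX.nullMeasurableSet) (by rwa [hvolfd])
  refine ⟨y, hy, x, hx, ?_, ?_⟩
  · intro hne
    apply hg
    have h : g +ᵥ x = x := hne ▸ hgxy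
    have h2 : (g : Fin n → ℝ) + x = x := h
    have h3 : (g : Fin n → ℝ) = 0 := by
      have := add_right_cancel (h2.trans (zero_add x).symm)
      exact this
    exact Subtype.ext h3
  · have hgmem : (g : Fin n → ℝ) ∈ Submodule.span ℤ (Set.range b) := g.2
    rw [Submodule.mem_span_range_iff_exists_fun] at hgmem
    obtain ⟨c, hc⟩ := hgmem
    refine ⟨c, ?_⟩
    have hyx : y - x = (g : Fin n → ℝ) := by
      rw [← hgxy]
      show ((g : Fin n → ℝ) + x) - x = (g : Fin n → ℝ)
      abel
    rw [hyx, ← hc]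
    ext j
    simp only [Finset.sum_apply, Pi.smul_apply, hb, zsmul_eq_mul, Int.cast_id,
      Matrix.mulVec, dotProduct]
    refine Finset.sum_congr rfl fun i _ => ?_
    simp [Matrix.mulVec_single, mul_comm]
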